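/- arXiv:2112.05837 — 2 statements merged into one kernel-verified Lean document; each statement's English description precedes it below -/
import Mathlib

section
/- Let X be a square-integrable ℝ^d-valued random vector and λ ≥ 0. Define G_λ(θ) = E[max{‖X−θ‖², λ}]. Then the vector g_λ(θ) = −2·E[(X − θ)·1(‖X−θ‖² > λ)] is a subgradient of G_λ at θ, i.e., G_λ(θ') ≥ G_λ(θ) + ⟨g_λ(θ), θ' − θ⟩ for all θ' ∈ ℝ^d. -/
open MeasureTheory ProbabilityTheory

/-- `g_λ(θ) = −2·E[(X−θ)·1(‖X−θ‖² > λ)]` is a subgradient at `θ` of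
`G_λ(θ) = E[max{‖X−θ‖², λ}]`. -/
theorem stmt4 {Ω : Type*} [MeasureSpace Ω] [IsProbabilityMeasure (ℙ : Measure Ω)]
    {d : ℕ} (X : Ω → EuclideanSpace ℝ (Fin d)) (hX : MemLp X 2 ℙ)
    (lam : ℝ) (hlam : 0 ≤ lam) (θ : EuclideanSpace ℝ (Fin d)) :
    ∀ θ' : EuclideanSpace ℝ (Fin d),
      (∫ ω : Ω, max (‖X ω - θ‖ ^ 2) lam ∂(ℙ : Measure Ω)) +
        inner ℝ ((-2 : ℝ) •
            ∫ ω : Ω, (if lam < ‖X ω - θ‖ ^ 2 then X ω - θ else 0) ∂(ℙ : Measure Ω))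
          (θ' - θ)
      ≤ ∫ ω : Ω, max (‖X ω - θ'‖ ^ 2) lam ∂(ℙ : Measure Ω) := by
  intro θ'
  set v := θ' - θ with hv
  -- Integrability facts
  have hY : MemLp (fun ω => X ω - θ) 2 ℙ := hX.sub (memLp_const θ)
  have hY' : MemLp (fun ω => X ω - θ') 2 ℙ := hX.sub (memLp_const θ')
  have hsq : Integrable (fun ω => ‖X ω - θ‖ ^ 2) ℙ := by
    have := hY.integrable_norm_rpow two_ne_zero ENNReal.ofNat_ne_top
    simpa [ENNReal.toReal_ofNat, Real.rpow_natCast, Real.rpow_two] using this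
  have hsq' : Integrable (fun ω => ‖X ω - θ'‖ ^ 2) ℙ := by
    have := hY'.integrable_norm_rpow two_ne_zero ENNReal.ofNat_ne_top
    simpa [ENNReal.toReal_ofNat, Real.rpow_natCast, Real.rpow_two] using this
  have hmax : Integrable (fun ω => max (‖X ω - θ‖ ^ 2) lam) ℙ :=
    hsq.sup (integrable_const lam)
  have hmax' : Integrable (fun ω => max (‖X ω - θ'‖ ^ 2) lam) ℙ :=
    hsq'.sup (integrable_const lam)
  have hYint : Integrable (fun ω => X ω - θ) ℙ :=
    hY.integrable (by norm_num)
  -- the indicator function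
  set g : Ω → EuclideanSpace ℝ (Fin d) :=
    fun ω => if lam < ‖X ω - θ‖ ^ 2 then X ω - θ else 0 with hgdef
  have hgm : AEStronglyMeasurable g ℙ := by
    have hs : MeasurableSet {y : EuclideanSpace ℝ (Fin d) | lam < ‖y‖ ^ 2} :=
      measurableSet_lt measurable_const ((measurable_norm).pow_const 2)
    have hφ : Measurable fun y : EuclideanSpace ℝ (Fin d) =>
        if lam < ‖y‖ ^ 2 then y else 0 := by
      exact Measurable.ite hs measurable_id measurable_const
    exact (hφ.comp_aemeasurable hYint.aemeasurable).aestronglyMeasurable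
  have hg : Integrable g ℙ := by
    refine Integrable.mono hYint hgm ?_
    filter_upwards with ω
    by_cases h : lam < ‖X ω - θ‖ ^ 2 <;> simp [hgdef, h, norm_nonneg]
  have hginner : Integrable (fun ω => (inner ℝ (g ω) v : ℝ)) ℙ := hg.inner_const v
  -- rewrite the inner product of the integral as an integral
  have hinner_eq : (inner ℝ ((-2 : ℝ) • ∫ ω, g ω ∂ℙ) v : ℝ)
      = ∫ ω, (-2 : ℝ) * inner ℝ (g ω) v ∂ℙ := by
    rw [real_inner_smul_left, integral_const_mul]
    congr 1
    rw [real_inner_comm, ← integral_inner hg v]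
    congr 1
    ext ω
    rw [real_inner_comm]
  -- pointwise inequality
  have key : ∀ ω, max (‖X ω - θ‖ ^ 2) lam + (-2 : ℝ) * inner ℝ (g ω) v
      ≤ max (‖X ω - θ'‖ ^ 2) lam := by
    intro ω
    by_cases h : lam < ‖X ω - θ‖ ^ 2
    · have hmx : max (‖X ω - θ‖ ^ 2) lam = ‖X ω - θ‖ ^ 2 := max_eq_left h.le
      have hge : ‖X ω - θ'‖ ^ 2 ≤ max (‖X ω - θ'‖ ^ 2) lam := le_max_left _ _
      have hexp : ‖X ω - θ'‖ ^ 2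
          = ‖X ω - θ‖ ^ 2 - 2 * inner ℝ (X ω - θ) v + ‖v‖ ^ 2 := by
        have : X ω - θ' = (X ω - θ) - v := by rw [hv]; abel
        rw [this, norm_sub_sq_real]
      have hv2 : (0:ℝ) ≤ ‖v‖ ^ 2 := sq_nonneg _
      simp only [hgdef, if_pos h]
      nlinarith [hge, hexp]
    · simp only [hgdef, if_neg h, inner_zero_left, mul_zero, add_zero]
      rw [max_eq_right (not_lt.mp h)]
      exact le_max_right _ _
  -- combine
  rw [hinner_eq, ← integral_add hmax (hginner.const_mul (-2))]
  exact integral_mono (hmax.add (hginner.const_mul (-2))) hmax' key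
end

section
/- Let X be a square-integrable ℝ^d-valued random vector and λ ≥ 0. Define the CCP iteration T(θ) = E[X·1(‖X−θ‖² ≤ λ)] + θ·P(‖X−θ‖² > λ) and the objective F(θ) = E[min{‖X−θ‖², λ}]. Then F(T(θ)) ≤ F(θ) for every θ ∈ ℝ^d, i.e., the convex–concave procedure iteration is a descent step. -/
open MeasureTheory ProbabilityTheory
open scoped RealInnerProductSpace

section Aux

variable {d : ℕ}

private lemma stmt17_ptwise (a θ θ' : EuclideanSpace ℝ (Fin d)) (lam : ℝ) :
    min (‖a - θ'‖ ^ 2) lam ≤ min (‖a - θ‖ ^ 2) lam + (‖a - θ'‖ ^ 2 - ‖a - θ‖ ^ 2)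
      + 2 * ⟪(if lam < ‖a - θ‖ ^ 2 then a - θ else (0 : EuclideanSpace ℝ (Fin d))), θ' - θ⟫ := by
  by_cases h : lam < ‖a - θ‖ ^ 2
  · rw [if_pos h]
    have hexp : ‖a - θ'‖ ^ 2 = ‖a - θ‖ ^ 2 - 2 * ⟪a - θ, θ' - θ⟫ + ‖θ' - θ‖ ^ 2 := by
      have hd : a - θ' = (a - θ) - (θ' - θ) := by abel
      rw [hd, norm_sub_sq_real]
    have h1 : min (‖a - θ‖ ^ 2) lam = lam := min_eq_right h.le
    have h2 : min (‖a - θ'‖ ^ 2) lam ≤ lam := min_le_right _ _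
    nlinarith [sq_nonneg ‖θ' - θ‖]
  · rw [if_neg h]
    have h1 : min (‖a - θ‖ ^ 2) lam = ‖a - θ‖ ^ 2 := min_eq_left (not_lt.mp h)
    have h2 : min (‖a - θ'‖ ^ 2) lam ≤ ‖a - θ'‖ ^ 2 := min_le_left _ _
    rw [inner_zero_left]
    linarith

variable {Ω : Type*} [MeasureSpace Ω] [IsProbabilityMeasure (ℙ : Measure Ω)]

private lemma stmt17_key (X : Ω → EuclideanSpace ℝ (Fin d)) (hXm : Measurable X)
    (hX : MemLp X 2 ℙ) (lam : ℝ) (θ θ' : EuclideanSpace ℝ (Fin d))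
    (hθ' : θ' = (∫ ω : Ω, (if ‖X ω - θ‖ ^ 2 ≤ lam then X ω else 0) ∂(ℙ : Measure Ω)) +
        (ℙ {ω | lam < ‖X ω - θ‖ ^ 2}).toReal • θ) :
    ∫ ω : Ω, min (‖X ω - θ'‖ ^ 2) lam ∂(ℙ : Measure Ω) ≤
      ∫ ω : Ω, min (‖X ω - θ‖ ^ 2) lam ∂(ℙ : Measure Ω) := by
  -- measurability
  have hnm : Measurable fun ω => ‖X ω - θ‖ ^ 2 :=
    ((hXm.sub measurable_const).norm).pow_const 2
  have hA : MeasurableSet {ω : Ω | ‖X ω - θ‖ ^ 2 ≤ lam} := measurableSet_le hnm measurable_const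
  have hB : MeasurableSet {ω : Ω | lam < ‖X ω - θ‖ ^ 2} := measurableSet_lt measurable_const hnm
  -- integrability
  have hXi : Integrable X ℙ := hX.integrable one_le_two
  have hsq : ∀ c : EuclideanSpace ℝ (Fin d), Integrable (fun ω => ‖X ω - c‖ ^ 2) ℙ := fun c =>
    (memLp_two_iff_integrable_sq_norm
      ((hXm.sub measurable_const).aestronglyMeasurable)).mp (hX.sub (memLp_const c))
  have hmin : ∀ c : EuclideanSpace ℝ (Fin d),
      Integrable (fun ω => min (‖X ω - c‖ ^ 2) lam) ℙ := fun c => by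
    refine ((hsq c).inf (integrable_const lam)).congr (Filter.Eventually.of_forall fun ω => ?_)
    simp [Pi.inf_apply]
  have hindXle : Integrable (fun ω => if ‖X ω - θ‖ ^ 2 ≤ lam then X ω else 0) ℙ := by
    refine (hXi.indicator hA).congr (Filter.Eventually.of_forall fun ω => ?_); simp [Set.indicator_apply]
  have hindXlt : Integrable (fun ω => if lam < ‖X ω - θ‖ ^ 2 then X ω else 0) ℙ := by
    refine (hXi.indicator hB).congr (Filter.Eventually.of_forall fun ω => ?_); simp [Set.indicator_apply]
  have hw : Integrable (fun ω => if lam < ‖X ω - θ‖ ^ 2 then X ω - θ else 0) ℙ := by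
    refine ((hXi.sub (integrable_const θ)).indicator hB).congr (Filter.Eventually.of_forall fun ω => ?_); simp [Set.indicator_apply]
  set v : EuclideanSpace ℝ (Fin d) :=
    ∫ ω, (if lam < ‖X ω - θ‖ ^ 2 then X ω - θ else 0) ∂(ℙ : Measure Ω) with hv
  set μX : EuclideanSpace ℝ (Fin d) := ∫ ω, X ω ∂(ℙ : Measure Ω) with hμX
  -- v = μX - θ'
  have hvθ' : v = μX - θ' := by
    have hconst : (∫ ω, (if lam < ‖X ω - θ‖ ^ 2 then θ else 0) ∂(ℙ : Measure Ω)) =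
        (ℙ {ω | lam < ‖X ω - θ‖ ^ 2}).toReal • θ := by
      rw [show (fun ω => if lam < ‖X ω - θ‖ ^ 2 then θ else 0) =
          Set.indicator {ω | lam < ‖X ω - θ‖ ^ 2} (fun _ => θ) from by
            funext ω; simp [Set.indicator_apply]]
      exact integral_indicator_const θ hB
    have hindθ : Integrable (fun ω => if lam < ‖X ω - θ‖ ^ 2 then θ else 0) ℙ := by
      refine ((integrable_const θ).indicator hB).congr (Filter.Eventually.of_forall fun ω => ?_); simp [Set.indicator_apply]
    have e1 : (∫ ω, (if lam < ‖X ω - θ‖ ^ 2 then X ω else 0) ∂(ℙ : Measure Ω)) =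
        μX - ∫ ω, (if ‖X ω - θ‖ ^ 2 ≤ lam then X ω else 0) ∂(ℙ : Measure Ω) := by
      have hpt : (fun ω => if lam < ‖X ω - θ‖ ^ 2 then X ω else 0) =
          fun ω => X ω - (if ‖X ω - θ‖ ^ 2 ≤ lam then X ω else 0) := by
        funext ω
        by_cases h : lam < ‖X ω - θ‖ ^ 2 <;> simp [h, not_lt.mp, not_le.mpr, not_lt]
      rw [hpt, integral_sub hXi hindXle, hμX]
    have e2 : v = (∫ ω, (if lam < ‖X ω - θ‖ ^ 2 then X ω else 0) ∂(ℙ : Measure Ω)) -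
        ∫ ω, (if lam < ‖X ω - θ‖ ^ 2 then θ else 0) ∂(ℙ : Measure Ω) := by
      rw [hv, ← integral_sub hindXlt hindθ]
      refine integral_congr_ae (Filter.Eventually.of_forall fun ω => ?_)
      by_cases h : lam < ‖X ω - θ‖ ^ 2 <;> simp [h]
    rw [e2, e1, hconst, hθ']
    abel
  -- main inequality via pointwise bound
  have hstep : ∫ ω, min (‖X ω - θ'‖ ^ 2) lam ∂(ℙ : Measure Ω) ≤
      ∫ ω, (min (‖X ω - θ‖ ^ 2) lam + (‖X ω - θ'‖ ^ 2 - ‖X ω - θ‖ ^ 2)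
        + 2 * ⟪(if lam < ‖X ω - θ‖ ^ 2 then X ω - θ else 0), θ' - θ⟫) ∂(ℙ : Measure Ω) := by
    refine integral_mono (hmin θ') ?_ (fun ω => stmt17_ptwise (X ω) θ θ' lam)
    exact ((hmin θ).add ((hsq θ').sub (hsq θ))).add ((hw.inner_const (θ' - θ)).const_mul 2)
  -- evaluate the right-hand side
  have hrhs : ∫ ω, (min (‖X ω - θ‖ ^ 2) lam + (‖X ω - θ'‖ ^ 2 - ‖X ω - θ‖ ^ 2)
        + 2 * ⟪(if lam < ‖X ω - θ‖ ^ 2 then X ω - θ else 0), θ' - θ⟫) ∂(ℙ : Measure Ω)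
      = (∫ ω, min (‖X ω - θ‖ ^ 2) lam ∂(ℙ : Measure Ω))
        + ((∫ ω, ‖X ω - θ'‖ ^ 2 ∂(ℙ : Measure Ω)) - ∫ ω, ‖X ω - θ‖ ^ 2 ∂(ℙ : Measure Ω))
        + 2 * ⟪v, θ' - θ⟫ := by
    have hi1 : Integrable (fun ω => min (‖X ω - θ‖ ^ 2) lam
        + (‖X ω - θ'‖ ^ 2 - ‖X ω - θ‖ ^ 2)) ℙ := (hmin θ).add ((hsq θ').sub (hsq θ))
    have hi2 : Integrable
        (fun ω => 2 * ⟪(if lam < ‖X ω - θ‖ ^ 2 then X ω - θ else 0), θ' - θ⟫) ℙ := by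
      exact (hw.inner_const (θ' - θ)).const_mul (2:ℝ)
    have hi3 : Integrable (fun ω => ‖X ω - θ'‖ ^ 2 - ‖X ω - θ‖ ^ 2) ℙ := (hsq θ').sub (hsq θ)
    rw [integral_add hi1 hi2, integral_add (hmin θ) hi3, integral_sub (hsq θ') (hsq θ)]
    congr 1
    have hflip : ∀ ω : Ω, (2 : ℝ) * ⟪(if lam < ‖X ω - θ‖ ^ 2 then X ω - θ else 0), θ' - θ⟫
        = 2 * ⟪θ' - θ, (if lam < ‖X ω - θ‖ ^ 2 then X ω - θ else 0)⟫ := fun ω => by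
      rw [real_inner_comm]
    simp_rw [hflip]
    rw [integral_const_mul, integral_inner hw, real_inner_comm]
  -- difference of quadratic terms
  have hquad : (∫ ω, ‖X ω - θ'‖ ^ 2 ∂(ℙ : Measure Ω)) - (∫ ω, ‖X ω - θ‖ ^ 2 ∂(ℙ : Measure Ω))
      = ‖θ'‖ ^ 2 - ‖θ‖ ^ 2 - 2 * ⟪μX, θ' - θ⟫ := by
    have hpt : ∀ ω : Ω, ‖X ω - θ'‖ ^ 2 - ‖X ω - θ‖ ^ 2
        = (‖θ'‖ ^ 2 - ‖θ‖ ^ 2) - 2 * ⟪θ' - θ, X ω⟫ := by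
      intro ω
      rw [norm_sub_sq_real, norm_sub_sq_real, inner_sub_left, real_inner_comm (X ω) θ',
        real_inner_comm (X ω) θ]
      ring
    have hmul : Integrable (fun ω => (2 : ℝ) * ⟪θ' - θ, X ω⟫) ℙ :=
      (hXi.const_inner (θ' - θ)).const_mul 2
    rw [← integral_sub (hsq θ') (hsq θ)]
    simp_rw [hpt]
    rw [integral_sub (integrable_const _) hmul, integral_const, integral_const_mul,
      integral_inner hXi, probReal_univ, real_inner_comm]
    simp [hμX]
  -- combine
  have hfinal : (∫ ω, ‖X ω - θ'‖ ^ 2 ∂(ℙ : Measure Ω)) - (∫ ω, ‖X ω - θ‖ ^ 2 ∂(ℙ : Measure Ω))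
      + 2 * ⟪v, θ' - θ⟫ = -‖θ' - θ‖ ^ 2 := by
    rw [hquad, hvθ', inner_sub_left, norm_sub_sq_real]
    have h1 : ⟪θ', θ' - θ⟫ = ‖θ'‖ ^ 2 - ⟪θ', θ⟫ := by
      rw [inner_sub_right, real_inner_self_eq_norm_sq]
    rw [h1]
    ring
  calc ∫ ω, min (‖X ω - θ'‖ ^ 2) lam ∂(ℙ : Measure Ω)
      ≤ (∫ ω, min (‖X ω - θ‖ ^ 2) lam ∂(ℙ : Measure Ω))
        + ((∫ ω, ‖X ω - θ'‖ ^ 2 ∂(ℙ : Measure Ω)) - ∫ ω, ‖X ω - θ‖ ^ 2 ∂(ℙ : Measure Ω))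
        + 2 * ⟪v, θ' - θ⟫ := by rw [← hrhs]; exact hstep
    _ = (∫ ω, min (‖X ω - θ‖ ^ 2) lam ∂(ℙ : Measure Ω)) - ‖θ' - θ‖ ^ 2 := by
        rw [add_assoc, hfinal]; ring
    _ ≤ ∫ ω, min (‖X ω - θ‖ ^ 2) lam ∂(ℙ : Measure Ω) := by nlinarith [sq_nonneg ‖θ' - θ‖]

end Aux

/-- the CCP iteration `T(θ) = E[X·1(‖X−θ‖² ≤ λ)] + θ·P(‖X−θ‖² > λ)` is a
descent step for `F(θ) = E[min{‖X−θ‖², λ}]`: `F(T θ) ≤ F θ` for all `θ`. -/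
theorem stmt17 {Ω : Type*} [MeasureSpace Ω] [IsProbabilityMeasure (ℙ : Measure Ω)]
    {d : ℕ} (X : Ω → EuclideanSpace ℝ (Fin d)) (hX : MemLp X 2 ℙ)
    (lam : ℝ) (hlam : 0 ≤ lam) :
    let T : EuclideanSpace ℝ (Fin d) → EuclideanSpace ℝ (Fin d) := fun θ =>
      (∫ ω : Ω, (if ‖X ω - θ‖ ^ 2 ≤ lam then X ω else 0) ∂(ℙ : Measure Ω)) +
        (ℙ {ω | lam < ‖X ω - θ‖ ^ 2}).toReal • θ
    let F : EuclideanSpace ℝ (Fin d) → ℝ := fun θ =>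
      ∫ ω : Ω, min (‖X ω - θ‖ ^ 2) lam ∂(ℙ : Measure Ω)
    ∀ θ : EuclideanSpace ℝ (Fin d), F (T θ) ≤ F θ := by
  intro T F θ
  -- replace X by a measurable representative Y
  set Y : Ω → EuclideanSpace ℝ (Fin d) := hX.1.mk X with hYdef
  have hYsm : StronglyMeasurable Y := hX.1.stronglyMeasurable_mk
  have hYm : Measurable Y := hYsm.measurable
  have hae : X =ᵐ[ℙ] Y := hX.1.ae_eq_mk
  have hYL2 : MemLp Y 2 ℙ := hX.ae_eq hae
  have hFeq : ∀ c : EuclideanSpace ℝ (Fin d),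
      F c = ∫ ω : Ω, min (‖Y ω - c‖ ^ 2) lam ∂(ℙ : Measure Ω) := by
    intro c
    refine integral_congr_ae ?_
    filter_upwards [hae] with ω h
    rw [h]
  have hTint : (∫ ω : Ω, (if ‖X ω - θ‖ ^ 2 ≤ lam then X ω else 0) ∂(ℙ : Measure Ω)) =
      ∫ ω : Ω, (if ‖Y ω - θ‖ ^ 2 ≤ lam then Y ω else 0) ∂(ℙ : Measure Ω) := by
    refine integral_congr_ae ?_
    filter_upwards [hae] with ω h
    rw [h]
  have hTmeas : ℙ {ω | lam < ‖X ω - θ‖ ^ 2} = ℙ {ω | lam < ‖Y ω - θ‖ ^ 2} := by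
    refine measure_congr ?_
    filter_upwards [hae] with ω h
    exact congrArg (fun z => lam < ‖z - θ‖ ^ 2) h
  have hTθ : T θ = (∫ ω : Ω, (if ‖Y ω - θ‖ ^ 2 ≤ lam then Y ω else 0) ∂(ℙ : Measure Ω)) +
      (ℙ {ω | lam < ‖Y ω - θ‖ ^ 2}).toReal • θ := by
    simp only [T, hTint, hTmeas]
  rw [hFeq (T θ), hFeq θ]
  exact stmt17_key Y hYm hYL2 lam θ (T θ) hTθ
end
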